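/- Entropy lower bound: Let μ be a nonzero finite Borel measure on S^{n-1} not concentrated in any closed hemisphere, and let Kᵢ ∈ 𝒦ⁿ_o be convex bodies with R_{Kᵢ} = h_{Kᵢ}(vᵢ) for some vᵢ ∈ S^{n-1} with vᵢ → v₀. Then there exist constants C_{μ,v₀} ∈ (0,1) and C̃_{μ,v₀} ∈ ℝ, independent of i, such that for all sufficiently large i, (1/|μ|)∫_{S^{n-1}} log h_{Kᵢ} dμ ≥ log r_{Kᵢ} + C_{μ,v₀} log(R_{Kᵢ}/r_{Kᵢ}) + C̃_{μ,v₀}. -/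

import Mathlib

open MeasureTheory Real Set Filter
open scoped RealInnerProductSpace ENNReal Topology

noncomputable section

/-- `ℝⁿ` as Euclidean space. -/
abbrev En (n : ℕ) := EuclideanSpace ℝ (Fin n)

/-- The Beta function `B(x,y) = Γ(x)Γ(y)/Γ(x+y)`. -/
def betaFn (x y : ℝ) : ℝ := Real.Gamma x * Real.Gamma y / Real.Gamma (x + y)

/-- Normalization constant `q_{b,m}` of the generalized Gaussian density. -/
def qConst (n : ℕ) (b m : ℝ) : ℝ :=
  if b < 0 then
    (m / n) * |b / m| ^ ((n : ℝ) / m) * Real.Gamma ((n : ℝ) / 2 + 1) /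
      (Real.pi ^ ((n : ℝ) / 2) * betaFn ((n : ℝ) / m) (1 - 1 / b))
  else if b = 0 then
    Real.Gamma ((n : ℝ) / 2 + 1) /
      (Real.pi ^ ((n : ℝ) / 2) * m ^ ((n : ℝ) / m) * Real.Gamma ((n : ℝ) / m + 1))
  else
    (m / n) * (b / m) ^ ((n : ℝ) / m) * Real.Gamma ((n : ℝ) / 2 + 1) /
      (Real.pi ^ ((n : ℝ) / 2) * betaFn ((n : ℝ) / m) (1 / b - (n : ℝ) / m))

/-- The generalized Gaussian density `g_{b,m}`. -/
def gg (n : ℕ) (b m : ℝ) (x : En n) : ℝ :=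
  if b = 0 then qConst n b m * Real.exp (-‖x‖ ^ m / m)
  else qConst n b m * (max (1 - b / m * ‖x‖ ^ m) 0) ^ (1 / b - (n : ℝ) / m - 1)

/-- The generalized Gaussian volume `γ_{b,m}(K)`. -/
def gvol (n : ℕ) (b m : ℝ) (K : Set (En n)) : ℝ := ∫ x in K, gg n b m x

/-- The support function `h_K`. -/
def sFn (n : ℕ) (K : Set (En n)) (v : En n) : ℝ := sSup ((fun x => ⟪x, v⟫) '' K)

/-- The unit sphere `S^{n-1}`. -/
def sph (n : ℕ) : Set (En n) := Metric.sphere (0 : En n) 1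

/-- The Wulff shape `[h]` of `h`. -/
def wulff (n : ℕ) (h : En n → ℝ) : Set (En n) := {x | ∀ v ∈ sph n, ⟪x, v⟫ ≤ h v}

/-- `R_K = max {|x| : x ∈ K}`. -/
def RK (n : ℕ) (K : Set (En n)) : ℝ := sSup ((fun x => ‖x‖) '' K)

/-- `r_K = min {|x| : x ∈ ∂K}`. -/
def rK (n : ℕ) (K : Set (En n)) : ℝ := sInf ((fun x => ‖x‖) '' frontier K)

/-- The radial function `ρ_K`. -/
def radF (n : ℕ) (K : Set (En n)) (u : En n) : ℝ := sSup {r : ℝ | 0 ≤ r ∧ r • u ∈ K}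

/-- `K` is a convex body containing the origin in its interior (class `𝒦ⁿ_o`). -/
def isBody (n : ℕ) (K : Set (En n)) : Prop :=
  IsCompact K ∧ Convex ℝ K ∧ (0 : En n) ∈ interior K

-- The Gauss map: the unique unit outer normal at `x ∈ ∂K`, when it exists (junk otherwise).
open scoped Classical in
def outerN (n : ℕ) (K : Set (En n)) (x : En n) : En n :=
  if h : ∃! v : En n, ‖v‖ = 1 ∧ ∀ y ∈ K, ⟪y, v⟫ ≤ ⟪x, v⟫ then h.choose else 0

/-- The generalized Gaussian cone measure `G_{b,m}(K, ·)`, as a Borel measure on `ℝⁿ`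
concentrated on the unit sphere: the pushforward under the Gauss map of the weighted
`(n-1)`-Hausdorff measure `(x · ν_K(x)) g_{b,m}(x) dℋ^{n-1}` on `∂K`. -/
def coneM (n : ℕ) (b m : ℝ) (K : Set (En n)) : Measure (En n) :=
  Measure.map (outerN n K)
    (((μH[(n : ℝ) - 1]).restrict (frontier K)).withDensity
      fun x => ENNReal.ofReal (⟪x, outerN n K x⟫ * gg n b m x))

/-- `μ` is not concentrated in any closed hemisphere. -/
def notConc (n : ℕ) (μ : Measure (En n)) : Prop :=
  ∀ u ∈ sph n, 0 < ∫ v, max ⟪v, u⟫ 0 ∂μ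


section EntropyAux

variable {n : ℕ}

lemma mem_sph_iff {w : En n} : w ∈ sph n ↔ ‖w‖ = 1 := by
  simp [sph, mem_sphere_zero_iff_norm]

lemma body_nonempty {K : Set (En n)} (hK : isBody n K) : K.Nonempty :=
  ⟨0, interior_subset hK.2.2⟩

lemma norm_bddAbove {K : Set (En n)} (hK : isBody n K) :
    BddAbove ((fun x => ‖x‖) '' K) := by
  obtain ⟨C, hC⟩ := isBounded_iff_forall_norm_le.1 hK.1.isBounded
  exact ⟨C, by rintro _ ⟨y, hy, rfl⟩; exact hC y hy⟩

lemma norm_le_RK {K : Set (En n)} (hK : isBody n K) {x : En n} (hx : x ∈ K) :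
    ‖x‖ ≤ RK n K := le_csSup (norm_bddAbove hK) ⟨x, hx, rfl⟩

lemma RK_nonneg {K : Set (En n)} (hK : isBody n K) : 0 ≤ RK n K := by
  have := norm_le_RK hK (interior_subset hK.2.2)
  simpa using this

lemma frontier_nonempty (hn : 0 < n) {K : Set (En n)} (hK : isBody n K) :
    (frontier K).Nonempty := by
  rw [nonempty_frontier_iff]
  refine ⟨body_nonempty hK, fun h => ?_⟩
  obtain ⟨C, hC⟩ := isBounded_iff_forall_norm_le.1 hK.1.isBounded
  have h1 := hC (EuclideanSpace.single (⟨0, hn⟩ : Fin n) (|C| + 1)) (by rw [h]; exact mem_univ _)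
  rw [EuclideanSpace.norm_single] at h1
  rw [Real.norm_eq_abs, abs_of_nonneg (by positivity)] at h1
  linarith [le_abs_self C]

lemma rK_le_norm {K : Set (En n)} {x : En n} (hx : x ∈ frontier K) : rK n K ≤ ‖x‖ :=
  csInf_le ⟨0, by rintro _ ⟨y, _, rfl⟩; exact norm_nonneg y⟩ ⟨x, hx, rfl⟩

lemma rK_pos (hn : 0 < n) {K : Set (En n)} (hK : isBody n K) : 0 < rK n K := by
  obtain ⟨ε, hε, hball⟩ := Metric.isOpen_iff.1 isOpen_interior 0 hK.2.2
  have key : ∀ y ∈ (fun x : En n => ‖x‖) '' frontier K, ε ≤ y := by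
    rintro _ ⟨x, hx, rfl⟩
    by_contra h
    push_neg at h
    exact hx.2 (hball (by rw [Metric.mem_ball, dist_zero_right]; exact h))
  exact lt_of_lt_of_le hε (le_csInf ((frontier_nonempty hn hK).image _) key)

lemma rK_le_RK (hn : 0 < n) {K : Set (En n)} (hK : isBody n K) : rK n K ≤ RK n K := by
  obtain ⟨x, hx⟩ := frontier_nonempty hn hK
  exact (rK_le_norm hx).trans (norm_le_RK hK (hK.1.isClosed.frontier_subset hx))

lemma ray_frontier {K : Set (En n)} (hK : isBody n K) {u : En n} (hu : ‖u‖ = 1) :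
    ∃ t : ℝ, 0 ≤ t ∧ t • u ∈ frontier K := by
  obtain ⟨C, hC⟩ := isBounded_iff_forall_norm_le.1 hK.1.isBounded
  set T : ℝ := |C| + 1 with hT
  have hT0 : 0 < T := by positivity
  have hTu : T • u ∉ K := by
    intro h
    have h1 := hC _ h
    rw [norm_smul, hu, mul_one, Real.norm_eq_abs, abs_of_pos hT0] at h1
    have := le_abs_self C
    simp only [hT] at h1
    linarith
  set S : Set ℝ := Icc 0 T ∩ (fun t : ℝ => t • u) ⁻¹' K with hS
  have hSne : S.Nonempty := ⟨0, ⟨le_refl 0, hT0.le⟩, by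
    simpa using interior_subset hK.2.2⟩
  have hSbdd : BddAbove S := ⟨T, fun t ht => ht.1.2⟩
  have hScl : IsClosed S :=
    isClosed_Icc.inter (hK.1.isClosed.preimage (continuous_id.smul continuous_const))
  set t₀ := sSup S with ht₀
  have ht₀S : t₀ ∈ S := hScl.csSup_mem hSne hSbdd
  refine ⟨t₀, ht₀S.1.1, ?_⟩
  rw [hK.1.isClosed.frontier_eq]
  refine ⟨ht₀S.2, fun hint => ?_⟩
  obtain ⟨δ, hδ, hball⟩ := Metric.isOpen_iff.1 isOpen_interior _ hint
  have ht₀T : t₀ < T := lt_of_le_of_ne ht₀S.1.2 (fun h => hTu (h ▸ ht₀S.2))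
  set ε := min (δ/2) (T - t₀) with hε
  have hε0 : 0 < ε := lt_min (by linarith) (by linarith)
  have hεδ : ε < δ := lt_of_le_of_lt (min_le_left _ _) (by linarith)
  have hεT : t₀ + ε ≤ T := by
    have := min_le_right (δ/2) (T - t₀)
    simp only [hε] at *
    linarith
  have hmem : t₀ + ε ∈ S := by
    constructor
    · exact ⟨by linarith [ht₀S.1.1], hεT⟩
    · show (t₀ + ε) • u ∈ K
      refine interior_subset (hball ?_)
      rw [Metric.mem_ball]
      have heq : (t₀ + ε) • u - t₀ • u = ε • u := by
        rw [← sub_smul]; ring_nf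
      rw [dist_eq_norm, heq, norm_smul, hu, mul_one, Real.norm_eq_abs, abs_of_pos hε0]
      exact hεδ
  have := le_csSup hSbdd hmem
  rw [← ht₀] at this
  linarith

lemma inner_bddAbove {K : Set (En n)} (hK : isBody n K) (w : En n) :
    BddAbove ((fun x => ⟪x, w⟫) '' K) := by
  refine ⟨RK n K * ‖w‖, ?_⟩
  rintro _ ⟨x, hx, rfl⟩
  exact (real_inner_le_norm x w).trans
    (mul_le_mul_of_nonneg_right (norm_le_RK hK hx) (norm_nonneg w))

lemma le_sFn {K : Set (En n)} (hK : isBody n K) {x : En n} (w : En n) (hx : x ∈ K) :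
    ⟪x, w⟫ ≤ sFn n K w := le_csSup (inner_bddAbove hK w) ⟨x, hx, rfl⟩

lemma sFn_le_RK {K : Set (En n)} (hK : isBody n K) {w : En n} (hw : ‖w‖ = 1) :
    sFn n K w ≤ RK n K := by
  refine csSup_le ((body_nonempty hK).image _) ?_
  rintro _ ⟨x, hx, rfl⟩
  have h1 := real_inner_le_norm x w
  rw [hw, mul_one] at h1
  exact h1.trans (norm_le_RK hK hx)

lemma rK_le_sFn (hn : 0 < n) {K : Set (En n)} (hK : isBody n K) {w : En n} (hw : ‖w‖ = 1) :
    rK n K ≤ sFn n K w := by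
  obtain ⟨t, ht0, htf⟩ := ray_frontier hK hw
  have hrt : rK n K ≤ t := by
    have h1 := rK_le_norm htf
    rwa [norm_smul, hw, mul_one, Real.norm_eq_abs, abs_of_nonneg ht0] at h1
  have ht0' : 0 < t := lt_of_lt_of_le (rK_pos hn hK) hrt
  have hmem : rK n K • w ∈ K := by
    have h1 : (rK n K / t) • (t • w) ∈ K :=
      hK.2.1.smul_mem_of_zero_mem (interior_subset hK.2.2)
        (hK.1.isClosed.frontier_subset htf)
        ⟨div_nonneg (rK_pos hn hK).le ht0'.le, by rw [div_le_one ht0']; exact hrt⟩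
    rwa [smul_smul, div_mul_cancel₀ _ ht0'.ne'] at h1
  have h2 := le_sFn hK w hmem
  rwa [real_inner_smul_left, real_inner_self_eq_norm_sq, hw, one_pow, mul_one] at h2

lemma RK_smul_mem {K : Set (En n)} (hK : isBody n K) {u : En n} (hu : ‖u‖ = 1)
    (h : sFn n K u = RK n K) : RK n K • u ∈ K := by
  have hcont : Continuous fun y : En n => ⟪y, u⟫ :=
    (continuous_id (X := En n)).inner continuous_const
  obtain ⟨x, hxK, hxmax⟩ := hK.1.exists_isMaxOn (body_nonempty hK) hcont.continuousOn
  have hsup : sFn n K u = ⟪x, u⟫ := le_antisymm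
    (csSup_le ((body_nonempty hK).image _) (by rintro _ ⟨y, hy, rfl⟩; exact hxmax hy))
    (le_sFn hK u hxK)
  have h1 : ⟪x, u⟫ = RK n K := hsup.symm.trans h
  have h2 : ‖x‖ ≤ RK n K := norm_le_RK hK hxK
  have h3 : RK n K ≤ ‖x‖ := by
    have h4 := real_inner_le_norm x u
    rw [hu, mul_one] at h4
    linarith
  have hxn : ‖x‖ = RK n K := le_antisymm h2 h3
  have heq : ⟪x, u⟫ = ‖x‖ * ‖u‖ := by rw [hu, mul_one, hxn]; exact h1
  have h5 := inner_eq_norm_mul_iff_real.1 heq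
  rw [hu, one_smul, hxn] at h5
  rw [← h5]; exact hxK

lemma sFn_sub_le {K : Set (En n)} (hK : isBody n K) (a b : En n) :
    sFn n K a ≤ sFn n K b + RK n K * ‖a - b‖ := by
  refine csSup_le ((body_nonempty hK).image _) ?_
  rintro _ ⟨x, hx, rfl⟩
  have h2 := le_sFn hK b hx
  have h3 := real_inner_le_norm x (a - b)
  have h4 := mul_le_mul_of_nonneg_right (norm_le_RK hK hx) (norm_nonneg (a - b))
  have h5 : ⟪x, a - b⟫ = ⟪x, a⟫ - ⟪x, b⟫ := inner_sub_right x a b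
  simp only at *
  linarith

lemma sFn_continuous {K : Set (En n)} (hK : isBody n K) : Continuous (sFn n K) := by
  have hlip : LipschitzWith (Real.toNNReal (RK n K)) (sFn n K) := by
    refine LipschitzWith.of_dist_le_mul fun a b => ?_
    rw [Real.dist_eq, Real.coe_toNNReal _ (RK_nonneg hK), dist_eq_norm, abs_sub_le_iff]
    constructor
    · have := sFn_sub_le hK a b; linarith
    · have := sFn_sub_le hK b a
      rw [norm_sub_rev] at this
      linarith
  exact hlip.continuous

end EntropyAux

/-- entropy lower bound
`(1/|μ|) ∫ log h_{Kᵢ} dμ ≥ log r_{Kᵢ} + C log (R_{Kᵢ}/r_{Kᵢ}) + C̃` for large `i`. -/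
theorem entropy_lower_bound (n : ℕ) (hn : 0 < n) (μ : Measure (En n))
    [IsFiniteMeasure μ] (hμs : μ (sph n)ᶜ = 0) (hμ0 : μ ≠ 0) (hμ : notConc n μ)
    (K : ℕ → Set (En n)) (hK : ∀ i, isBody n (K i))
    (v : ℕ → En n) (hv : ∀ i, v i ∈ sph n)
    (hmax : ∀ i, sFn n (K i) (v i) = RK n (K i))
    (v₀ : En n) (hv₀ : v₀ ∈ sph n) (hconv : Tendsto v atTop (𝓝 v₀)) :
    ∃ C ∈ Ioo (0 : ℝ) 1, ∃ C' : ℝ, ∃ N : ℕ, ∀ i ≥ N,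
      Real.log (rK n (K i)) + C * Real.log (RK n (K i) / rK n (K i)) + C' ≤
        (1 / (μ Set.univ).toReal) * ∫ w, Real.log (sFn n (K i) w) ∂μ := by
  have hM0 : 0 < (μ Set.univ).toReal :=
    ENNReal.toReal_pos (Measure.measure_univ_pos.2 hμ0).ne' (measure_ne_top μ _)
  -- the set of directions with positive inner product with v₀ has positive measure
  have key : ∀ u : En n, u ∈ sph n → 0 < μ {w | 0 < ⟪w, u⟫} := by
    intro u hu
    by_contra hcon
    push_neg at hcon
    have hz : μ {w | 0 < ⟪w, u⟫} = 0 := le_antisymm hcon zero_le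
    have hint0 : ∫ w, max ⟪w, u⟫ 0 ∂μ = 0 := by
      refine integral_eq_zero_of_ae ?_
      rw [Filter.EventuallyEq, ae_iff]
      refine measure_mono_null ?_ hz
      intro w hw
      simp only [mem_setOf_eq, Pi.zero_apply] at hw ⊢
      by_contra h2
      push_neg at h2
      exact hw (max_eq_right h2)
    have := hμ u hu
    linarith
  have hposset : 0 < μ {w | 0 < ⟪w, v₀⟫} := key v₀ hv₀
  have hnegv₀ : -v₀ ∈ sph n := by
    rw [mem_sph_iff, norm_neg]; exact mem_sph_iff.1 hv₀
  have hnegset : 0 < μ {w | ⟪w, v₀⟫ < 0} := by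
    have h1 := key (-v₀) hnegv₀
    have h2 : {w : En n | 0 < ⟪w, -v₀⟫} = {w | ⟪w, v₀⟫ < 0} := by
      ext w; simp [inner_neg_right]
    rwa [h2] at h1
  -- choose a cap of positive measure
  have hcap : ∃ k : ℕ, μ {w | 1 / ((k : ℝ) + 1) ≤ ⟪w, v₀⟫} ≠ 0 := by
    by_contra hcon
    push_neg at hcon
    have hsub : {w : En n | 0 < ⟪w, v₀⟫} ⊆ ⋃ k : ℕ, {w | 1 / ((k : ℝ) + 1) ≤ ⟪w, v₀⟫} := by
      intro w hw
      obtain ⟨k, hk⟩ := exists_nat_one_div_lt (K := ℝ) hw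
      exact mem_iUnion.2 ⟨k, hk.le⟩
    exact absurd (measure_mono_null hsub (measure_iUnion_null hcon)) hposset.ne'
  obtain ⟨k, hk⟩ := hcap
  set α₀ : ℝ := 1 / ((k : ℝ) + 1) with hα₀def
  have hα0 : 0 < α₀ := by positivity
  have hα1 : α₀ ≤ 1 := by
    rw [hα₀def, div_le_one (by positivity)]
    simp
  set Ω : Set (En n) := {w | α₀ ≤ ⟪w, v₀⟫} with hΩdef
  have hΩmeas : MeasurableSet Ω :=
    (isClosed_le continuous_const ((continuous_id (X := En n)).inner continuous_const)).measurableSet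
  have hΩpos : μ Ω ≠ 0 := hk
  have hΩlt : μ Ω < μ Set.univ := by
    have hsub : {w : En n | ⟪w, v₀⟫ < 0} ⊆ Ωᶜ := by
      intro w hw
      simp only [hΩdef, mem_compl_iff, mem_setOf_eq, not_le]
      exact lt_of_lt_of_le hw hα0.le
    have hcomp : 0 < μ Ωᶜ := lt_of_lt_of_le hnegset (measure_mono hsub)
    have h1 : μ Ω < μ Ω + μ Ωᶜ := ENNReal.lt_add_right (measure_ne_top μ Ω) hcomp.ne'
    rwa [measure_add_measure_compl hΩmeas] at h1
  set C : ℝ := (μ Ω).toReal / (μ Set.univ).toReal with hCdef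
  have hC0 : 0 < C := div_pos (ENNReal.toReal_pos hΩpos (measure_ne_top μ Ω)) hM0
  have hC1 : C < 1 := (div_lt_one hM0).2
    ((ENNReal.toReal_lt_toReal (measure_ne_top μ Ω) (measure_ne_top μ _)).2 hΩlt)
  obtain ⟨N, hN⟩ := Metric.tendsto_atTop.1 hconv (α₀ / 2) (by positivity)
  refine ⟨C, ⟨hC0, hC1⟩, Real.log (α₀ / 2), N, fun i hi => ?_⟩
  have hKi := hK i
  set r : ℝ := rK n (K i) with hrdef
  set R : ℝ := RK n (K i) with hRdef
  have hr0 : 0 < r := rK_pos hn hKi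
  have hrR : r ≤ R := rK_le_RK hn hKi
  have hR0 : 0 < R := lt_of_lt_of_le hr0 hrR
  have hvi : ‖v i‖ = 1 := mem_sph_iff.1 (hv i)
  have hRvK : R • v i ∈ K i := RK_smul_mem hKi hvi (hmax i)
  have hae : ∀ᵐ w ∂μ, w ∈ sph n := by
    rw [ae_iff]
    exact hμs
  set A : ℝ := Real.log (α₀ / 2) + Real.log R with hA
  set φ : En n → ℝ := fun w => Real.log r + Ω.indicator (fun _ => A - Real.log r) w with hφ
  have hhlb : ∀ w ∈ sph n, r ≤ sFn n (K i) w := fun w hw =>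
    rK_le_sFn hn hKi (mem_sph_iff.1 hw)
  have hbound : ∀ᵐ w ∂μ, φ w ≤ Real.log (sFn n (K i) w) := by
    filter_upwards [hae] with w hw
    have hw1 : ‖w‖ = 1 := mem_sph_iff.1 hw
    by_cases hΩw : w ∈ Ω
    · simp only [hφ, indicator_of_mem hΩw]
      have h1 : α₀ ≤ ⟪w, v₀⟫ := hΩw
      have h2 : ⟪v i - v₀, w⟫ = ⟪v i, w⟫ - ⟪v₀, w⟫ := inner_sub_left (v i) v₀ w
      have h3 := abs_real_inner_le_norm (v i - v₀) w
      rw [hw1, mul_one] at h3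
      have h4 : ‖v i - v₀‖ < α₀ / 2 := by
        rw [← dist_eq_norm]; exact hN i hi
      have h5 : ⟪w, v₀⟫ = ⟪v₀, w⟫ := real_inner_comm v₀ w
      have h6 := neg_abs_le ⟪v i - v₀, w⟫
      have hiw : α₀ / 2 ≤ ⟪v i, w⟫ := by linarith
      have hineq : α₀ / 2 * R ≤ sFn n (K i) w := by
        have h7 := le_sFn hKi w hRvK
        rw [real_inner_smul_left] at h7
        nlinarith
      have hA' : Real.log (α₀ / 2 * R) ≤ Real.log (sFn n (K i) w) :=
        Real.log_le_log (by positivity) hineq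
      rw [Real.log_mul (by positivity) hR0.ne'] at hA'
      rw [hA]
      linarith
    · simp only [hφ, indicator_of_notMem hΩw, add_zero]
      exact Real.log_le_log hr0 (hhlb w hw)
  have hmeas : Measurable fun w => Real.log (sFn n (K i) w) :=
    Real.measurable_log.comp (sFn_continuous hKi).measurable
  have hint : Integrable (fun w => Real.log (sFn n (K i) w)) μ := by
    refine (integrable_const (max |Real.log r| |Real.log R|)).mono'
      hmeas.aestronglyMeasurable ?_
    filter_upwards [hae] with w hw
    rw [Real.norm_eq_abs]
    exact abs_le_max_abs_abs (Real.log_le_log hr0 (hhlb w hw))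
      (Real.log_le_log (lt_of_lt_of_le hr0 (hhlb w hw)) (sFn_le_RK hKi (mem_sph_iff.1 hw)))
  have hφint : Integrable φ μ :=
    (integrable_const _).add ((integrable_const (A - Real.log r)).indicator hΩmeas)
  have hle : ∫ w, φ w ∂μ ≤ ∫ w, Real.log (sFn n (K i) w) ∂μ :=
    integral_mono_ae hφint hint hbound
  have hφeq : ∫ w, φ w ∂μ =
      (μ Set.univ).toReal * Real.log r + (μ Ω).toReal * (A - Real.log r) := by
    rw [hφ, integral_add (integrable_const _) ((integrable_const _).indicator hΩmeas),
      integral_const, integral_indicator hΩmeas, setIntegral_const]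
    simp [smul_eq_mul]
    rfl
  have hfinal : Real.log r + C * Real.log (R / r) + Real.log (α₀ / 2) ≤
      (1 / (μ Set.univ).toReal) * ∫ w, φ w ∂μ := by
    rw [hφeq]
    have hlog : A - Real.log r = Real.log (α₀ / 2) + Real.log (R / r) := by
      rw [hA, Real.log_div hR0.ne' hr0.ne']; ring
    have hL : Real.log (α₀ / 2) ≤ 0 := Real.log_nonpos (by positivity) (by linarith)
    rw [hlog]
    have heq2 : (1 / (μ Set.univ).toReal) *
        ((μ Set.univ).toReal * Real.log r +
          (μ Ω).toReal * (Real.log (α₀ / 2) + Real.log (R / r)))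
        = Real.log r + C * Real.log (α₀ / 2) + C * Real.log (R / r) := by
      rw [hCdef]
      field_simp
      ring
    rw [heq2]
    nlinarith [hC1.le, hL]
  have hmul : (1 / (μ Set.univ).toReal) * ∫ w, φ w ∂μ ≤
      (1 / (μ Set.univ).toReal) * ∫ w, Real.log (sFn n (K i) w) ∂μ :=
    mul_le_mul_of_nonneg_left hle (by positivity)
  linarith
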